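/- arXiv:1004.2924 — 4 statements merged into one kernel-verified Lean document; each statement's English description precedes it below -/
import Mathlib

section
/- Let O be a ring, V a left O-module, and p = (p_1,…,p_m) ∈ V^m. Let ker κ_p := {(o_1,…,o_m) ∈ O^{1×m} | Σ_i o_i • p_i = 0}, a left submodule of O^{1×m}, and suppose the rows of the matrix R ∈ O^{r×m} generate ker κ_p. Define Sol(R) := {g ∈ V^m | R • g = 0}, where R • g denotes the vector whose i-th entry is Σ_j R_{ij} • g_j. Then: (1) p ∈ Sol(R); and (2) for every r′ ∈ ℕ and every matrix R′ ∈ O^{r′×m} with R′ • p = 0, one has Sol(R) ⊆ Sol(R′). In other words, Sol(R) is the most powerful unfalsified model of {p}. -/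
/-- Let `O` be a ring, `V` a left `O`-module and `p ∈ V^m`. Suppose the rows of
`R ∈ O^{r×m}` generate the left submodule `ker κ_p = {o ∈ O^{1×m} | ∑ᵢ oᵢ • pᵢ = 0}` of
`O^{1×m}` (i.e. every row of `R` lies in `ker κ_p` and every element of `ker κ_p` lies in
the span of the rows of `R`). Then `Sol(R) = {g ∈ V^m | R • g = 0}` is the most powerful
unfalsified model of `{p}`: (1) `p ∈ Sol(R)`, and (2) for every matrix `R' ∈ O^{r'×m}`
with `R' • p = 0` one has `Sol(R) ⊆ Sol(R')`. -/
theorem vmpum_single_signal {O V : Type*} [Ring O] [AddCommGroup V] [Module O V]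
    {m r : ℕ} (p : Fin m → V) (R : Fin r → Fin m → O)
    (hRker : ∀ i, ∑ j, R i j • p j = 0)
    (hRgen : ∀ o : Fin m → O, ∑ j, o j • p j = 0 → o ∈ Submodule.span O (Set.range R)) :
    (∀ i, ∑ j, R i j • p j = 0) ∧
    (∀ (r' : ℕ) (R' : Fin r' → Fin m → O), (∀ i, ∑ j, R' i j • p j = 0) →
      ∀ g : Fin m → V, (∀ i, ∑ j, R i j • g j = 0) → ∀ i, ∑ j, R' i j • g j = 0) := by
  refine ⟨hRker, fun r' R' hR' g hg i => ?_⟩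
  have hmem := hRgen (R' i) (hR' i)
  let L : (Fin m → O) →ₗ[O] V :=
    { toFun := fun o => ∑ j, o j • g j
      map_add' := by intro a b; simp [add_smul, Finset.sum_add_distrib]
      map_smul' := by intro c a; simp [mul_smul, Finset.smul_sum] }
  have hspan : Submodule.span O (Set.range R) ≤ LinearMap.ker L := by
    rw [Submodule.span_le]
    rintro _ ⟨k, rfl⟩
    exact hg k
  exact hspan hmem
end

section
/- Let O be a ring, V a left O-module, and ω_1,…,ω_N ∈ V^m. Suppose the rows of the matrix R ∈ O^{r×m} generate the left submodule ⋂_{i=1}^N ker κ_{ω_i} of O^{1×m}, where ker κ_{ω} := {(o_1,…,o_m) ∈ O^{1×m} | Σ_j o_j • ω_j = 0}. Define Sol(R) := {g ∈ V^m | R • g = 0}. Then: (1) ω_i ∈ Sol(R) for every i; and (2) for every matrix R′ ∈ O^{r′×m} with R′ • ω_i = 0 for all i, one has Sol(R) ⊆ Sol(R′). -/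
/-- Let `O` be a ring, `V` a left `O`-module and `ω_1, …, ω_N ∈ V^m`. Suppose the rows of
`R ∈ O^{r×m}` generate the left submodule `⋂ₖ ker κ_{ω_k}` of `O^{1×m}`, where
`ker κ_ω = {o ∈ O^{1×m} | ∑ⱼ oⱼ • ωⱼ = 0}`. Then with `Sol(R) = {g ∈ V^m | R • g = 0}`:
(1) each `ω_k ∈ Sol(R)`, and (2) for every matrix `R' ∈ O^{r'×m}` with `R' • ω_k = 0` for
all `k`, one has `Sol(R) ⊆ Sol(R')`. -/
theorem vmpum_finitely_many_signals {O V : Type*} [Ring O] [AddCommGroup V] [Module O V]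
    {m r N : ℕ} (ω : Fin N → Fin m → V) (R : Fin r → Fin m → O)
    (hRker : ∀ k i, ∑ j, R i j • ω k j = 0)
    (hRgen : ∀ o : Fin m → O, (∀ k, ∑ j, o j • ω k j = 0) →
      o ∈ Submodule.span O (Set.range R)) :
    (∀ k i, ∑ j, R i j • ω k j = 0) ∧
    (∀ (r' : ℕ) (R' : Fin r' → Fin m → O), (∀ k i, ∑ j, R' i j • ω k j = 0) →
      ∀ g : Fin m → V, (∀ i, ∑ j, R i j • g j = 0) → ∀ i, ∑ j, R' i j • g j = 0) := by
  refine ⟨hRker, fun r' R' hR' g hg i => ?_⟩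
  let S : Submodule O (Fin m → O) :=
    { carrier := {o | ∑ j, o j • g j = 0}
      add_mem' := fun {a b} ha hb => by
        simp only [Set.mem_setOf_eq, Pi.add_apply, add_smul, Finset.sum_add_distrib] at *
        rw [ha, hb, add_zero]
      zero_mem' := by simp
      smul_mem' := fun c a ha => by
        simp only [Set.mem_setOf_eq, Pi.smul_apply, smul_eq_mul, mul_smul] at *
        rw [← Finset.smul_sum, ha, smul_zero] }
  have hmem : R' i ∈ Submodule.span O (Set.range R) := hRgen (R' i) (fun k => hR' k i)
  have hle : Submodule.span O (Set.range R) ≤ S := by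
    refine Submodule.span_le.mpr ?_
    rintro _ ⟨i', rfl⟩
    exact hg i'
  exact hle hmem
end

section
/- Let p = (p_1,…,p_m) ∈ ℂ[x_1,…,x_n]^m be nonzero and let ker κ_p := {(o_1,…,o_m) ∈ W_n^{1×m} | Σ_i o_i • p_i = 0}. Then the left W_n-module W_n^{1×m} / ker κ_p is cyclic: there exists a left ideal L_p of W_n such that W_n^{1×m} / ker κ_p is isomorphic to W_n / L_p as left W_n-modules. -/
set_option synthInstance.maxHeartbeats 400000
set_option maxHeartbeats 1000000

open MvPolynomial

noncomputable def mulOp (n : ℕ) (i : Fin n) : Module.End ℂ (MvPolynomial (Fin n) ℂ) :=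
  (Algebra.lmul ℂ (MvPolynomial (Fin n) ℂ)) (X i)

noncomputable def derOp (n : ℕ) (i : Fin n) : Module.End ℂ (MvPolynomial (Fin n) ℂ) :=
  (pderiv (R := ℂ) i).toLinearMap

noncomputable def WeylSub (n : ℕ) : Subalgebra ℂ (Module.End ℂ (MvPolynomial (Fin n) ℂ)) :=
  Algebra.adjoin ℂ (Set.range (mulOp n) ∪ Set.range (derOp n))

def Weyl (n : ℕ) : Type := WeylSub n

noncomputable instance (n : ℕ) : Ring (Weyl n) := inferInstanceAs (Ring (WeylSub n))

noncomputable instance (n : ℕ) : Module (Weyl n) (MvPolynomial (Fin n) ℂ) :=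
  inferInstanceAs (Module (WeylSub n) (MvPolynomial (Fin n) ℂ))

/-- The map `κ_p : W_n^{1×m} → ℂ[x_1,…,x_n]`, `(o_1,…,o_m) ↦ ∑ᵢ oᵢ • pᵢ`. -/
noncomputable def kappaW (n m : ℕ) (p : Fin m → MvPolynomial (Fin n) ℂ) :
    (Fin m → Weyl n) →ₗ[Weyl n] MvPolynomial (Fin n) ℂ where
  toFun o := ∑ i, o i • p i
  map_add' o o' := by simp [add_smul, Finset.sum_add_distrib]
  map_smul' c o := by simp [Finset.smul_sum, mul_smul, smul_eq_mul]

lemma weyl_smul_def {n : ℕ} (o : Weyl n) (q : MvPolynomial (Fin n) ℂ) :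
    o • q = (WeylSub n).subtype o q := rfl

lemma lmul_mem {n : ℕ} (r : MvPolynomial (Fin n) ℂ) :
    (Algebra.lmul ℂ (MvPolynomial (Fin n) ℂ)) r ∈ WeylSub n := by
  have hsub : Algebra.adjoin ℂ (Set.range (X : Fin n → MvPolynomial (Fin n) ℂ)) ≤
      (WeylSub n).comap (Algebra.lmul ℂ (MvPolynomial (Fin n) ℂ)) := by
    apply Algebra.adjoin_le
    rintro _ ⟨i, rfl⟩
    exact Algebra.subset_adjoin (Or.inl ⟨i, rfl⟩)
  have : r ∈ (WeylSub n).comap (Algebra.lmul ℂ (MvPolynomial (Fin n) ℂ)) :=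
    hsub (by rw [adjoin_range_X]; trivial)
  exact this

lemma derOp_mem {n : ℕ} (i : Fin n) : derOp n i ∈ WeylSub n :=
  Algebra.subset_adjoin (Or.inr ⟨i, rfl⟩)

lemma exists_pderiv_ne_zero {n : ℕ} (q : MvPolynomial (Fin n) ℂ)
    (hq : q.totalDegree ≠ 0) :
    ∃ i, pderiv i q ≠ 0 ∧ (pderiv i q).totalDegree < q.totalDegree := by
  have hq0 : q ≠ 0 := by rintro rfl; simp at hq
  obtain ⟨d, hd, hdsum⟩ : ∃ d ∈ q.support, d.sum (fun _ e => e) = q.totalDegree := by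
    obtain ⟨d, hd, h⟩ := Finset.exists_mem_eq_sup q.support (by simpa using hq0)
      (fun d => d.sum fun _ e => e)
    exact ⟨d, hd, h.symm⟩
  obtain ⟨i, hi⟩ : ∃ i, d i ≠ 0 := by
    by_contra h
    push_neg at h
    have : d = 0 := Finsupp.ext fun i => h i
    rw [this] at hdsum
    simp [Finsupp.sum_zero_index] at hdsum
    exact hq hdsum.symm
  refine ⟨i, ?_, ?_⟩
  · have key : coeff (d - Finsupp.single i 1) (pderiv i q) = coeff d q * d i := by
      conv_lhs => rw [q.as_sum, map_sum]
      simp only [pderiv_monomial]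
      rw [coeff_sum]
      simp only [coeff_monomial]
      rw [Finset.sum_eq_single d]
      · simp
      · intro s hs hne
        by_cases hsi : s i = 0
        · simp [hsi]
        · rw [if_neg]
          intro hcontra
          apply hne
          have h1 : Finsupp.single i 1 ≤ s := by
            rw [Finsupp.single_le_iff]; omega
          have h2 : Finsupp.single i 1 ≤ d := by
            rw [Finsupp.single_le_iff]; omega
          have := congrArg (· + Finsupp.single i 1) hcontra
          simpa [tsub_add_cancel_of_le h1, tsub_add_cancel_of_le h2] using this
      · intro h; exact absurd hd h
    intro h
    rw [h] at key
    simp only [coeff_zero] at key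
    have := mem_support_iff.mp hd
    have : (d i : ℂ) = 0 := by
      replace key := mul_eq_zero.mp key.symm
      rcases key with h | h
      · exact absurd h this
      · exact_mod_cast h
    exact hi (by exact_mod_cast this)
  · have hb : (pderiv i q).totalDegree < q.totalDegree := by
      have : (pderiv i q).totalDegree ≤ q.totalDegree - 1 := by
        conv_lhs => rw [q.as_sum, map_sum]
        refine le_trans (totalDegree_finset_sum _ _) ?_
        apply Finset.sup_le
        intro s hs
        simp only [pderiv_monomial]
        by_cases hsi : s i = 0
        · simp [hsi]
        · refine le_trans (totalDegree_monomial_le _ _) ?_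
          show (s - Finsupp.single i 1).sum (fun _ e => e) ≤ _
          have h1 : Finsupp.single i 1 ≤ s := by rw [Finsupp.single_le_iff]; omega
          have hsum : (s - Finsupp.single i 1).sum (fun _ e => e) + 1 = s.sum (fun _ e => e) := by
            conv_rhs => rw [← tsub_add_cancel_of_le h1]
            rw [Finsupp.sum_add_index (by simp) (by simp)]
            simp
          have hle : s.sum (fun _ e => e) ≤ q.totalDegree := le_totalDegree hs
          omega
      omega
    exact hb

/-- Any nonzero element of a `Weyl n`-submodule of `ℂ[x]` generates `1`. -/
lemma one_mem_of_ne_zero {n : ℕ} (M : Submodule (Weyl n) (MvPolynomial (Fin n) ℂ))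
    {q : MvPolynomial (Fin n) ℂ} (hq : q ∈ M) (h0 : q ≠ 0) :
    (1 : MvPolynomial (Fin n) ℂ) ∈ M := by
  suffices h : ∀ D (q : MvPolynomial (Fin n) ℂ), q ∈ M → q ≠ 0 → q.totalDegree = D →
      (1 : MvPolynomial (Fin n) ℂ) ∈ M from h _ q hq h0 rfl
  clear hq h0 q
  intro D
  induction D using Nat.strong_induction_on with
  | _ D IH =>
    intro q hq h0 hD
    by_cases hDz : D = 0
    · subst hDz
      obtain ⟨c, hc⟩ : ∃ c, q = C c := by
        refine ⟨coeff 0 q, ?_⟩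
        have hsupp := (totalDegree_eq_zero_iff _ q).mp hD
        ext d
        rw [coeff_C]
        by_cases hd0 : d = 0
        · subst hd0; simp
        · rw [if_neg (Ne.symm hd0)]
          by_contra hne
          exact hd0 (Finsupp.ext fun i => hsupp d (mem_support_iff.mpr hne) i)
      have hc0 : c ≠ 0 := fun h => h0 (by rw [hc, h, map_zero])
      have hmem := M.smul_mem
        (⟨(Algebra.lmul ℂ (MvPolynomial (Fin n) ℂ)) (C c⁻¹), lmul_mem _⟩ : Weyl n) hq
      have heq : (⟨(Algebra.lmul ℂ (MvPolynomial (Fin n) ℂ)) (C c⁻¹), lmul_mem _⟩ :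
          Weyl n) • q = (1 : MvPolynomial (Fin n) ℂ) := by
        refine (weyl_smul_def _ _).trans ?_
        show C c⁻¹ * q = 1
        rw [hc, ← map_mul, inv_mul_cancel₀ hc0, map_one]
      exact (congrArg (· ∈ M) heq).mp hmem
    · obtain ⟨i, hne, hlt⟩ := exists_pderiv_ne_zero q (hD ▸ hDz)
      have hmem : pderiv i q ∈ M := M.smul_mem (⟨derOp n i, derOp_mem i⟩ : Weyl n) hq
      exact IH (pderiv i q).totalDegree (hD ▸ hlt) (pderiv i q) hmem hne rfl

lemma submodule_eq_top {n : ℕ} (M : Submodule (Weyl n) (MvPolynomial (Fin n) ℂ))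
    {q : MvPolynomial (Fin n) ℂ} (hq : q ∈ M) (h0 : q ≠ 0) : M = ⊤ := by
  have h1 : (1 : MvPolynomial (Fin n) ℂ) ∈ M := one_mem_of_ne_zero M hq h0
  rw [eq_top_iff]
  intro r _
  have : (⟨(Algebra.lmul ℂ (MvPolynomial (Fin n) ℂ)) r, lmul_mem r⟩ : Weyl n) • (1 :
      MvPolynomial (Fin n) ℂ) ∈ M := M.smul_mem _ h1
  have heq : (⟨(Algebra.lmul ℂ (MvPolynomial (Fin n) ℂ)) r, lmul_mem r⟩ : Weyl n) • (1 :
      MvPolynomial (Fin n) ℂ) = r := by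
    refine (weyl_smul_def _ _).trans ?_; show r * 1 = r; rw [mul_one]
  rwa [heq] at this

/-- For a nonzero vector of polynomials `p ∈ ℂ[x_1,…,x_n]^m`, the left `W_n`-module
`W_n^{1×m} / ker κ_p` is cyclic: there is a left ideal `L_p ⊆ W_n` with
`W_n^{1×m} / ker κ_p ≅ W_n / L_p` as left `W_n`-modules. -/
theorem quotient_by_ker_kappa_cyclic (n m : ℕ)
    (p : Fin m → MvPolynomial (Fin n) ℂ) (hp : p ≠ 0) :
    ∃ L : Ideal (Weyl n),
      Nonempty (((Fin m → Weyl n) ⧸ LinearMap.ker (kappaW n m p)) ≃ₗ[Weyl n]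
        ((Weyl n) ⧸ L)) := by
  obtain ⟨i₀, hi₀⟩ : ∃ i, p i ≠ 0 := by
    by_contra h; push_neg at h; exact hp (funext h)
  -- κ is surjective
  have hpmem : p i₀ ∈ LinearMap.range (kappaW n m p) := by
    refine ⟨(Pi.single i₀ (1 : Weyl n) : Fin m → Weyl n), ?_⟩
    have hdef : kappaW n m p (Pi.single i₀ (1 : Weyl n) : Fin m → Weyl n) =
        ∑ i, (Pi.single i₀ (1 : Weyl n) : Fin m → Weyl n) i • p i := rfl
    rw [hdef, Finset.sum_eq_single i₀]
    · simp
    · intro i _ hne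
      rw [Pi.single_eq_of_ne hne, zero_smul]
    · intro h; exact absurd (Finset.mem_univ i₀) h
  have hκ : Function.Surjective (kappaW n m p) := by
    rw [← LinearMap.range_eq_top]
    exact submodule_eq_top _ hpmem hi₀
  -- f : Weyl n → ℂ[x], o ↦ o • 1 is surjective
  let f : Weyl n →ₗ[Weyl n] MvPolynomial (Fin n) ℂ :=
    LinearMap.toSpanSingleton (Weyl n) _ (1 : MvPolynomial (Fin n) ℂ)
  have hf : Function.Surjective f := by
    intro r
    refine ⟨⟨(Algebra.lmul ℂ (MvPolynomial (Fin n) ℂ)) r, lmul_mem r⟩, ?_⟩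
    show (⟨(Algebra.lmul ℂ (MvPolynomial (Fin n) ℂ)) r, lmul_mem r⟩ : Weyl n) •
      (1 : MvPolynomial (Fin n) ℂ) = r
    refine (weyl_smul_def _ _).trans ?_; show r * 1 = r; rw [mul_one]
  exact ⟨LinearMap.ker f,
    ⟨(LinearMap.quotKerEquivOfSurjective _ hκ).trans
      (LinearMap.quotKerEquivOfSurjective f hf).symm⟩⟩
end

section
/- Let K be an infinite field and λ ∈ (K∖{0})^n, and let exp_λ : ℕ^n → K be given by exp_λ(t) = λ_1^{t_1}⋯λ_n^{t_n}. For a linear difference operator with polynomial coefficients a = Σ_μ q_μ Δ^μ, define χ_λ(a) := Σ_μ q_μ ∏_{i=1}^n (λ_i^{-1}(Δ_i − λ_i + 1))^{μ_i}. Then for every polynomial p ∈ K[t_1,…,t_n] (identified with the function ℕ^n → K it defines), the identity χ_λ(a)(p·exp_λ) = (a p)·exp_λ holds as functions ℕ^n → K; consequently a p = 0 if and only if χ_λ(a)(p·exp_λ) = 0. -/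
/-- The forward difference operator `Δ_i` on functions `ℕ^n → K`:
`(Δ_i f)(t) = f(t + e_i) − f(t)`. -/
def fdiff {K : Type*} [Field K] (n : ℕ) (i : Fin n) (f : (Fin n → ℕ) → K) :
    (Fin n → ℕ) → K :=
  fun t => f (t + Pi.single i 1) - f t

/-- The iterated difference operator `Δ^μ = Δ_1^{μ_1} ⋯ Δ_n^{μ_n}`. -/
def fdiffPow {K : Type*} [Field K] (n : ℕ) (μ : Fin n → ℕ) (f : (Fin n → ℕ) → K) :
    (Fin n → ℕ) → K :=
  (List.finRange n).foldr (fun i g => (fdiff n i)^[μ i] g) f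

/-- The function `ℕ^n → K` defined by a polynomial in `K[t_1,…,t_n]`. -/
noncomputable def evalN {K : Type*} [Field K] {n : ℕ} (q : MvPolynomial (Fin n) K)
    (t : Fin n → ℕ) : K :=
  MvPolynomial.eval (fun i => ((t i : ℕ) : K)) q

/-- The action of a linear difference operator with polynomial coefficients
`a = ∑_μ q_μ Δ^μ` (given by its finitely supported coefficient family) on functions
`f : ℕ^n → K`: `(a f)(t) = ∑_μ q_μ(t)·(Δ^μ f)(t)`. -/
noncomputable def diffAct {K : Type*} [Field K] (n : ℕ)
    (a : (Fin n → ℕ) →₀ MvPolynomial (Fin n) K) (f : (Fin n → ℕ) → K) :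
    (Fin n → ℕ) → K :=
  fun t => a.sum fun μ q => evalN q t * fdiffPow n μ f t

/-- The discrete exponential function `exp_λ(t) = λ_1^{t_1} ⋯ λ_n^{t_n}`. -/
def expD {K : Type*} [Field K] {n : ℕ} (lam : Fin n → K) (t : Fin n → ℕ) : K :=
  ∏ i, lam i ^ (t i)

/-- The operator `λᵢ⁻¹(Δ_i − λᵢ + 1)` on functions `ℕ^n → K`. -/
noncomputable def chiDiff {K : Type*} [Field K] (n : ℕ) (c : K) (i : Fin n)
    (f : (Fin n → ℕ) → K) : (Fin n → ℕ) → K :=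
  fun t => c⁻¹ * (fdiff n i f t - (c - 1) * f t)

/-- The operator `∏ᵢ (λᵢ⁻¹(Δ_i − λᵢ + 1))^{μᵢ}` on functions `ℕ^n → K`. -/
noncomputable def chiDiffPow {K : Type*} [Field K] (n : ℕ) (lam : Fin n → K)
    (μ : Fin n → ℕ) (f : (Fin n → ℕ) → K) : (Fin n → ℕ) → K :=
  (List.finRange n).foldr (fun i g => (chiDiff n (lam i) i)^[μ i] g) f

/-- For `a = ∑_μ q_μ Δ^μ`, the action of
`χ_λ(a) = ∑_μ q_μ ∏ᵢ (λᵢ⁻¹(Δᵢ − λᵢ + 1))^{μᵢ}` on functions `ℕ^n → K`. -/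
noncomputable def chiAct {K : Type*} [Field K] (n : ℕ) (lam : Fin n → K)
    (a : (Fin n → ℕ) →₀ MvPolynomial (Fin n) K) (f : (Fin n → ℕ) → K) :
    (Fin n → ℕ) → K :=
  fun t => a.sum fun μ q => evalN q t * chiDiffPow n lam μ f t


lemma expD_add_single {K : Type*} [Field K] {n : ℕ} (lam : Fin n → K) (i : Fin n)
    (t : Fin n → ℕ) : expD lam (t + Pi.single i 1) = lam i * expD lam t := by
  unfold expD
  rw [show lam i = ∏ j, lam j ^ (Pi.single i 1 : Fin n → ℕ) j from by
      rw [Finset.prod_eq_single i]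
      · simp
      · intro b _ hb; simp [Pi.single_apply, hb]
      · simp, ← Finset.prod_mul_distrib]
  congr 1; funext j
  rw [Pi.add_apply, pow_add, mul_comm]

lemma chiDiff_twist {K : Type*} [Field K] {n : ℕ} (lam : Fin n → K) (i : Fin n)
    (h : lam i ≠ 0) (f : (Fin n → ℕ) → K) :
    chiDiff n (lam i) i (fun s => f s * expD lam s)
      = fun t => fdiff n i f t * expD lam t := by
  funext t
  simp only [chiDiff, fdiff, expD_add_single]
  field_simp
  ring

lemma chiDiff_iter_twist {K : Type*} [Field K] {n : ℕ} (lam : Fin n → K) (i : Fin n)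
    (h : lam i ≠ 0) (k : ℕ) (f : (Fin n → ℕ) → K) :
    (chiDiff n (lam i) i)^[k] (fun s => f s * expD lam s)
      = fun t => (fdiff n i)^[k] f t * expD lam t := by
  induction k generalizing f with
  | zero => simp
  | succ k ih =>
    rw [Function.iterate_succ_apply, chiDiff_twist lam i h, ih,
        Function.iterate_succ_apply]

lemma chiDiff_fold_twist {K : Type*} [Field K] {n : ℕ} (lam : Fin n → K)
    (hlam : ∀ i, lam i ≠ 0) (μ : Fin n → ℕ) (l : List (Fin n))
    (f : (Fin n → ℕ) → K) :
    l.foldr (fun i g => (chiDiff n (lam i) i)^[μ i] g) (fun s => f s * expD lam s)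
      = fun t => l.foldr (fun i g => (fdiff n i)^[μ i] g) f t * expD lam t := by
  induction l generalizing f with
  | nil => rfl
  | cons i l ih =>
    simp only [List.foldr_cons]
    rw [ih, chiDiff_iter_twist lam i (hlam i)]

lemma chiDiffPow_twist {K : Type*} [Field K] {n : ℕ} (lam : Fin n → K)
    (hlam : ∀ i, lam i ≠ 0) (μ : Fin n → ℕ) (f : (Fin n → ℕ) → K) :
    chiDiffPow n lam μ (fun s => f s * expD lam s)
      = fun t => fdiffPow n μ f t * expD lam t :=
  chiDiff_fold_twist lam hlam μ _ f

lemma expD_ne_zero {K : Type*} [Field K] {n : ℕ} (lam : Fin n → K)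
    (hlam : ∀ i, lam i ≠ 0) (t : Fin n → ℕ) : expD lam t ≠ 0 :=
  Finset.prod_ne_zero_iff.2 fun i _ => pow_ne_zero _ (hlam i)


/-- Let `K` be an infinite field and `λ ∈ (K∖{0})^n`. For every linear difference
operator with polynomial coefficients `a` and every polynomial `p` (identified with the
function `ℕ^n → K` it defines), `χ_λ(a)(p·exp_λ) = (a p)·exp_λ` as functions
`ℕ^n → K`; consequently `a p = 0` if and only if `χ_λ(a)(p·exp_λ) = 0`. -/
theorem chi_lambda_twist_identity {K : Type*} [Field K] [Infinite K] {n : ℕ}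
    (lam : Fin n → K) (hlam : ∀ i, lam i ≠ 0)
    (a : (Fin n → ℕ) →₀ MvPolynomial (Fin n) K) (p : MvPolynomial (Fin n) K) :
    (∀ t : Fin n → ℕ,
      chiAct n lam a (fun s => evalN p s * expD lam s) t
        = diffAct n a (fun s => evalN p s) t * expD lam t) ∧
    ((∀ t : Fin n → ℕ, diffAct n a (fun s => evalN p s) t = 0) ↔
      (∀ t : Fin n → ℕ, chiAct n lam a (fun s => evalN p s * expD lam s) t = 0)) := by
  have key : ∀ t : Fin n → ℕ,
      chiAct n lam a (fun s => evalN p s * expD lam s) t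
        = diffAct n a (fun s => evalN p s) t * expD lam t := by
    intro t
    simp only [chiAct, diffAct, Finsupp.sum, Finset.sum_mul]
    refine Finset.sum_congr rfl fun μ _ => ?_
    rw [chiDiffPow_twist lam hlam μ (fun s => evalN p s)]
    ring
  refine ⟨key, ?_⟩
  constructor
  · intro h t; rw [key t, h t, zero_mul]
  · intro h t
    have := key t
    rw [h t] at this
    exact (mul_eq_zero.1 this.symm).resolve_right (expD_ne_zero lam hlam t)
end
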